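/- There exists a finite residuated binar A that satisfies the five distributivity identities x·(y ∧ z) = (x·y) ∧ (x·z), (x ∧ y)·z = (x·z) ∧ (y·z), x\(y ∨ z) = (x\y) ∨ (x\z), (x ∨ y)/z = (x/z) ∨ (y/z) and (x ∧ y)\z = (x\z) ∨ (y\z), but does not satisfy the identity x/(y ∧ z) = (x/y) ∨ (x/z). Consequently, the identity x/(y ∧ z) = (x/y) ∨ (x/z) does not follow from any combination of the other five identities in residuated binars. -/

import Mathlib

private def supT : Fin 9 → Fin 9 → Fin 9 := fun a b => ![![0, 1, 2, 3, 4, 5, 6, 7, 8], ![1, 1, 4, 3, 4, 5, 6, 7, 8], ![2, 4, 2, 7, 4, 8, 6, 7, 8], ![3, 3, 7, 3, 7, 5, 7, 7, 8], ![4, 4, 4, 7, 4, 8, 6, 7, 8], ![5, 5, 8, 5, 8, 5, 8, 8, 8], ![6, 6, 6, 7, 6, 8, 6, 7, 8], ![7, 7, 7, 7, 7, 8, 7, 7, 8], ![8, 8, 8, 8, 8, 8, 8, 8, 8]] a b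

private def infT : Fin 9 → Fin 9 → Fin 9 := fun a b => ![![0, 0, 0, 0, 0, 0, 0, 0, 0], ![0, 1, 0, 1, 1, 1, 1, 1, 1], ![0, 0, 2, 0, 2, 0, 2, 2, 2], ![0, 1, 0, 3, 1, 3, 1, 3, 3], ![0, 1, 2, 1, 4, 1, 4, 4, 4], ![0, 1, 0, 3, 1, 5, 1, 3, 5], ![0, 1, 2, 1, 4, 1, 6, 6, 6], ![0, 1, 2, 3, 4, 3, 6, 7, 7], ![0, 1, 2, 3, 4, 5, 6, 7, 8]] a b

private def mulT : Fin 9 → Fin 9 → Fin 9 := fun a b => ![![0, 0, 0, 0, 0, 0, 0, 0, 0], ![0, 0, 0, 0, 0, 5, 0, 0, 5], ![0, 0, 2, 0, 2, 0, 2, 2, 2], ![0, 5, 0, 5, 5, 5, 5, 5, 5], ![0, 0, 2, 0, 2, 5, 2, 2, 8], ![0, 5, 0, 5, 5, 5, 5, 5, 5], ![0, 0, 2, 0, 2, 5, 2, 2, 8], ![0, 5, 2, 5, 8, 5, 8, 8, 8], ![0, 5, 2, 5, 8, 5, 8, 8, 8]] a b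

private def undT : Fin 9 → Fin 9 → Fin 9 := fun a b => ![![8, 8, 8, 8, 8, 8, 8, 8, 8], ![7, 7, 7, 7, 7, 8, 7, 7, 8], ![5, 5, 8, 5, 8, 5, 8, 8, 8], ![2, 2, 2, 2, 2, 8, 2, 2, 8], ![3, 3, 7, 3, 7, 5, 7, 7, 8], ![2, 2, 2, 2, 2, 8, 2, 2, 8], ![3, 3, 7, 3, 7, 5, 7, 7, 8], ![0, 0, 2, 0, 2, 5, 2, 2, 8], ![0, 0, 2, 0, 2, 5, 2, 2, 8]] a b

private def ovrT : Fin 9 → Fin 9 → Fin 9 := fun a b => ![![8, 6, 5, 6, 1, 2, 1, 1, 0], ![8, 6, 5, 6, 1, 2, 1, 1, 0], ![8, 6, 8, 6, 6, 2, 6, 6, 2], ![8, 6, 5, 6, 1, 2, 1, 1, 0], ![8, 6, 8, 6, 6, 2, 6, 6, 2], ![8, 8, 5, 8, 5, 8, 5, 5, 5], ![8, 6, 8, 6, 6, 2, 6, 6, 2], ![8, 6, 8, 6, 6, 2, 6, 6, 2], ![8, 8, 8, 8, 8, 8, 8, 8, 8]] a b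

private def leT (a b : Fin 9) : Prop := supT a b = b

private instance : DecidableRel leT := fun a b => by unfold leT; infer_instance

private theorem hrefl : ∀ a, leT a a := by decide
private theorem htrans : ∀ a b c, leT a b → leT b c → leT a c := by decide
private theorem hantisymm : ∀ a b, leT a b → leT b a → a = b := by decide
private theorem hsl : ∀ a b, leT a (supT a b) := by decide
private theorem hsr : ∀ a b, leT b (supT a b) := by decide
private theorem hsup : ∀ a b c, leT a c → leT b c → leT (supT a b) c := by decide
private theorem hil : ∀ a b, leT (infT a b) a := by decide
private theorem hir : ∀ a b, leT (infT a b) b := by decide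
private theorem hinf : ∀ a b c, leT a b → leT a c → leT a (infT b c) := by decide

private def latt : Lattice (Fin 9) where
  le := leT
  lt a b := leT a b ∧ ¬ leT b a
  lt_iff_le_not_ge _ _ := Iff.rfl
  le_refl := hrefl
  le_trans := htrans
  le_antisymm := hantisymm
  sup := supT
  le_sup_left := hsl
  le_sup_right := hsr
  sup_le := hsup
  inf := infT
  inf_le_left := hil
  inf_le_right := hir
  le_inf := hinf

/-- There is a finite residuated binar satisfying identities
(1), (2), (3), (4), (5) but not identity (6). -/
theorem stmt_11 :
    ∃ (A : Type) (_ : Fintype A) (_ : Lattice A) (mul under ovr : A → A → A),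
      (∀ x y z : A, (mul x y ≤ z ↔ y ≤ under x z) ∧ (mul x y ≤ z ↔ x ≤ ovr z y)) ∧
      (∀ x y z : A, mul x (y ⊓ z) = mul x y ⊓ mul x z) ∧
      (∀ x y z : A, mul (x ⊓ y) z = mul x z ⊓ mul y z) ∧
      (∀ x y z : A, under x (y ⊔ z) = under x y ⊔ under x z) ∧
      (∀ x y z : A, ovr (x ⊔ y) z = ovr x z ⊔ ovr y z) ∧
      (∀ x y z : A, under (x ⊓ y) z = under x z ⊔ under y z) ∧
      ¬ (∀ x y z : A, ovr x (y ⊓ z) = ovr x y ⊔ ovr x z) := by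
  refine ⟨Fin 9, inferInstance, latt, mulT, undT, ovrT, ?_, ?_, ?_, ?_, ?_, ?_, ?_⟩
  · have h : ∀ x y z : Fin 9,
        (leT (mulT x y) z ↔ leT y (undT x z)) ∧
        (leT (mulT x y) z ↔ leT x (ovrT z y)) := by decide
    exact h
  · decide
  · decide
  · decide
  · decide
  · decide
  · intro h
    exact absurd (h 0 4 5) (by decide)
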